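/- Let X ∈ ℝ^{n×d_x}, Y ∈ ℝ^{n×d_y}, C ∈ ℝ^{M×d_x}, D ∈ ℝ^{M×d_y}, A ∈ ℝ^{ℓ×d_x}, B ∈ ℝ^{ℓ×d_y} be real matrices, let ε ≥ 0, and let k, m be integers with 1 ≤ k < m ≤ min(d_x,d_y). Set Φ = ‖X‖_F‖Y‖_F − ‖XᵀY‖_k. Assume: (i) ‖XᵀY − CᵀD‖ ≤ (1+ε)/(m−k)·Φ, and (ii) ‖CᵀD − AᵀB‖ ≤ (1/(m−k))·(‖X‖_F‖Y‖_F − ‖CᵀD‖_k). Then ‖XᵀY − AᵀB‖ ≤ ((2+ε)/(m−k) + (1+ε)·k/(m−k)²)·Φ. -/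

import Mathlib

open scoped BigOperators

theorem Matrix.isHermitian_transpose_mul_self {p q : ℕ} (M : Matrix (Fin p) (Fin q) ℝ) :
    (M.transpose * M).IsHermitian := by
  simpa using Matrix.isHermitian_conjTranspose_mul_self M

/-- `sval M i` is the `i`-th (0-indexed, in nonincreasing order) singular value of the
real matrix `M`, i.e. the square root of the `i`-th largest eigenvalue of `MᵀM`,
with the convention that it is `0` out of range. -/
noncomputable def sval {p q : ℕ} (M : Matrix (Fin p) (Fin q) ℝ) : ℕ → ℝ := fun i =>
  if h : i < q then
    Real.sqrt ((Matrix.isHermitian_transpose_mul_self M).eigenvalues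
      ((Tuple.sort (Matrix.isHermitian_transpose_mul_self M).eigenvalues) (Fin.rev ⟨i, h⟩)))
  else 0

/-- The spectral norm `‖M‖ = σ₁(M)`. -/
noncomputable def specNorm {p q : ℕ} (M : Matrix (Fin p) (Fin q) ℝ) : ℝ := sval M 0

/-- The Ky Fan `k`-norm `‖M‖_k = σ₁(M) + ⋯ + σ_k(M)`. -/
noncomputable def kyFan {p q : ℕ} (M : Matrix (Fin p) (Fin q) ℝ) (k : ℕ) : ℝ :=
  ∑ i ∈ Finset.range k, sval M i

/-- The nuclear norm `‖M‖_* = Σᵢ σᵢ(M)`. -/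
noncomputable def nucNorm {p q : ℕ} (M : Matrix (Fin p) (Fin q) ℝ) : ℝ :=
  kyFan M (min p q)

/-- The Frobenius norm `‖M‖_F`. -/
noncomputable def froNorm {p q : ℕ} (M : Matrix (Fin p) (Fin q) ℝ) : ℝ :=
  Real.sqrt (∑ i, ∑ j, (M i j) ^ 2)

namespace SCODAux
open Matrix Module
variable {p q : ℕ}

noncomputable def eig (M : Matrix (Fin p) (Fin q) ℝ) : Fin q → ℝ :=
  (Matrix.isHermitian_transpose_mul_self M).eigenvalues

noncomputable def evb (M : Matrix (Fin p) (Fin q) ℝ) :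
    OrthonormalBasis (Fin q) ℝ (EuclideanSpace ℝ (Fin q)) :=
  (Matrix.isHermitian_transpose_mul_self M).eigenvectorBasis

lemma eig_nonneg (M : Matrix (Fin p) (Fin q) ℝ) (j : Fin q) : 0 ≤ eig M j :=
  Matrix.eigenvalues_conjTranspose_mul_self_nonneg M j

lemma sval_eq (M : Matrix (Fin p) (Fin q) ℝ) {i : ℕ} (h : i < q) :
    sval M i = Real.sqrt (eig M (Tuple.sort (eig M) (Fin.rev ⟨i, h⟩))) := by
  rw [sval, dif_pos h]; rfl

lemma sval_nonneg (M : Matrix (Fin p) (Fin q) ℝ) (i : ℕ) : 0 ≤ sval M i := by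
  rw [sval]; split
  · exact Real.sqrt_nonneg _
  · exact le_refl 0

lemma sval_sq (M : Matrix (Fin p) (Fin q) ℝ) {i : ℕ} (h : i < q) :
    sval M i ^ 2 = eig M (Tuple.sort (eig M) (Fin.rev ⟨i, h⟩)) := by
  rw [sval_eq M h, Real.sq_sqrt (eig_nonneg _ _)]

/-! ### Quadratic form identities -/

lemma quad (M : Matrix (Fin p) (Fin q) ℝ) (x : Fin q → ℝ) :
    x ⬝ᵥ ((Mᴴ * M) *ᵥ x) = ∑ i, ((M *ᵥ x) i) ^ 2 := by
  rw [← mulVec_mulVec, dotProduct_mulVec, vecMul_conjTranspose]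
  simp [dotProduct, pow_two]

lemma coe_expand (M : Matrix (Fin p) (Fin q) ℝ) (x : EuclideanSpace ℝ (Fin q)) :
    (x : Fin q → ℝ) = ∑ j, (evb M).repr x j • ⇑(evb M j) := by
  have hx : ∑ j, (evb M).repr x j • (evb M j) = x := (evb M).sum_repr x
  funext i
  have := congrFun (congrArg (fun (y : EuclideanSpace ℝ (Fin q)) => (y : Fin q → ℝ)) hx.symm) i
  simpa using this

lemma mulVec_expand (M : Matrix (Fin p) (Fin q) ℝ) (x : EuclideanSpace ℝ (Fin q)) :
    (Mᴴ * M) *ᵥ (x : Fin q → ℝ) =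
      ∑ j, ((evb M).repr x j * eig M j) • ⇑(evb M j) := by
  calc (Mᴴ * M) *ᵥ (x : Fin q → ℝ)
      = (Mᴴ * M).mulVecLin (∑ j, (evb M).repr x j • ⇑(evb M j)) := by rw [← coe_expand]; rfl
    _ = ∑ j, (evb M).repr x j • ((Mᴴ * M) *ᵥ ⇑(evb M j)) := by
        rw [map_sum]; simp [Matrix.mulVecLin]
        simp only [← Matrix.mulVec_mulVec, Matrix.mulVec_transpose]
    _ = ∑ j, ((evb M).repr x j * eig M j) • ⇑(evb M j) := by
        refine Finset.sum_congr rfl fun j _ => ?_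
        show _ • (Mᵀ * M) *ᵥ ⇑((Matrix.isHermitian_transpose_mul_self M).eigenvectorBasis j) = _
        rw [(Matrix.isHermitian_transpose_mul_self M).mulVec_eigenvectorBasis]
        rw [smul_smul]; rfl

lemma quad_repr (M : Matrix (Fin p) (Fin q) ℝ) (x : EuclideanSpace ℝ (Fin q)) :
    (x : Fin q → ℝ) ⬝ᵥ ((Mᴴ * M) *ᵥ (x : Fin q → ℝ)) = ∑ j, eig M j * ((evb M).repr x j) ^ 2 := by
  rw [mulVec_expand]
  have hdx : ∀ j, (x : Fin q → ℝ) ⬝ᵥ ⇑(evb M j) = (evb M).repr x j := by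
    intro j
    rw [(evb M).repr_apply_apply]
    simp [PiLp.inner_apply, dotProduct, mul_comm]
  calc (x : Fin q → ℝ) ⬝ᵥ ∑ j, ((evb M).repr x j * eig M j) • ⇑(evb M j)
      = ∑ j, ((evb M).repr x j * eig M j) * ((x : Fin q → ℝ) ⬝ᵥ ⇑(evb M j)) := by
        simp [dotProduct, Finset.sum_apply, Finset.mul_sum, Finset.sum_mul]
        rw [Finset.sum_comm]
        exact Finset.sum_congr rfl fun j _ => Finset.sum_congr rfl fun i _ => by ring
    _ = ∑ j, eig M j * ((evb M).repr x j) ^ 2 := by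
        refine Finset.sum_congr rfl fun j _ => ?_
        rw [hdx j]; ring

lemma normsq_repr (M : Matrix (Fin p) (Fin q) ℝ) (x : EuclideanSpace ℝ (Fin q)) :
    ∑ i, (x i) ^ 2 = ∑ j, ((evb M).repr x j) ^ 2 := by
  have h1 : ‖x‖ = ‖(evb M).repr x‖ := ((evb M).repr.norm_map x).symm
  have h2 : ‖x‖ ^ 2 = ∑ i, (x i) ^ 2 := by
    rw [EuclideanSpace.norm_eq, Real.sq_sqrt (by positivity)]
    simp [Real.norm_eq_abs, sq_abs]
  have h3 : ‖(evb M).repr x‖ ^ 2 = ∑ j, ((evb M).repr x j) ^ 2 := by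
    rw [EuclideanSpace.norm_eq, Real.sq_sqrt (by positivity)]
    simp [Real.norm_eq_abs, sq_abs]
  rw [← h2, h1, h3]

/-! ### Span support lemmas -/

lemma repr_eq_zero_of_mem_span (b : OrthonormalBasis (Fin q) ℝ (EuclideanSpace ℝ (Fin q)))
    (s : Set (Fin q)) {x : EuclideanSpace ℝ (Fin q)}
    (hx : x ∈ Submodule.span ℝ (⇑b '' s)) {j : Fin q} (hj : j ∉ s) : b.repr x j = 0 := by
  set l : EuclideanSpace ℝ (Fin q) →ₗ[ℝ] ℝ :=
    (EuclideanSpace.proj j : EuclideanSpace ℝ (Fin q) →L[ℝ] ℝ).toLinearMap.comp (b.repr.toLinearEquiv : EuclideanSpace ℝ (Fin q) ≃ₗ[ℝ] _).toLinearMap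
  have hker : Submodule.span ℝ (⇑b '' s) ≤ LinearMap.ker l := by
    rw [Submodule.span_le]
    rintro - ⟨j', hj', rfl⟩
    simp only [SetLike.mem_coe, LinearMap.mem_ker, l, LinearMap.comp_apply, LinearMap.proj_apply]
    show b.repr (b j') j = 0
    rw [b.repr_self]
    have hne : j' ≠ j := fun h => hj (h ▸ hj')
    simp [EuclideanSpace.single_apply, hne.symm]
  exact hker hx

lemma finrank_span_image (b : OrthonormalBasis (Fin q) ℝ (EuclideanSpace ℝ (Fin q)))
    (s : Finset (Fin q)) :
    finrank ℝ (Submodule.span ℝ (⇑b '' (s : Set (Fin q)))) = s.card := by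
  have hli : LinearIndependent ℝ (fun j : (s : Set (Fin q)) => b j) :=
    (b.orthonormal.linearIndependent).comp _ Subtype.coe_injective
  have himg : ⇑b '' (s : Set (Fin q)) = Set.range (fun j : (s : Set (Fin q)) => b j) := by
    rw [Set.image_eq_range]
  rw [himg, finrank_span_eq_card hli]
  simp

lemma exists_ne_zero_mem_inf (S U : Submodule ℝ (EuclideanSpace ℝ (Fin q)))
    (h : q < finrank ℝ S + finrank ℝ U) : ∃ x, x ∈ S ∧ x ∈ U ∧ x ≠ 0 := by
  have hE : finrank ℝ (EuclideanSpace ℝ (Fin q)) = q := by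
    simp [finrank_euclideanSpace]
  have hsup : finrank ℝ ↥(S ⊔ U) ≤ finrank ℝ (EuclideanSpace ℝ (Fin q)) := Submodule.finrank_le _
  have heq := Submodule.finrank_sup_add_finrank_inf_eq S U
  have hpos : 0 < finrank ℝ ↥(S ⊓ U) := by omega
  have : Nontrivial ↥(S ⊓ U) := Module.nontrivial_of_finrank_pos hpos
  obtain ⟨x, hx⟩ := exists_ne (0 : ↥(S ⊓ U))
  exact ⟨(x : EuclideanSpace ℝ (Fin q)), x.2.1, x.2.2, fun h0 => hx (Subtype.ext h0)⟩

/-! ### Rayleigh-type bounds on spans -/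

lemma quad_le_of_mem_span (M : Matrix (Fin p) (Fin q) ℝ) (s : Finset (Fin q)) (c : ℝ)
    (hc : ∀ j ∈ s, eig M j ≤ c) {x : EuclideanSpace ℝ (Fin q)}
    (hx : x ∈ Submodule.span ℝ (⇑(evb M) '' (s : Set (Fin q)))) :
    ∑ i, ((M *ᵥ (x : Fin q → ℝ)) i) ^ 2 ≤ c * ∑ i, (x i) ^ 2 := by
  rw [← quad, quad_repr, normsq_repr M x, Finset.mul_sum]
  refine Finset.sum_le_sum fun j _ => ?_
  by_cases hj : j ∈ s
  · exact mul_le_mul_of_nonneg_right (hc j hj) (sq_nonneg _)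
  · rw [repr_eq_zero_of_mem_span (evb M) _ hx hj]
    simp

lemma quad_ge_of_mem_span (M : Matrix (Fin p) (Fin q) ℝ) (s : Finset (Fin q)) (c : ℝ)
    (hc : ∀ j ∈ s, c ≤ eig M j) {x : EuclideanSpace ℝ (Fin q)}
    (hx : x ∈ Submodule.span ℝ (⇑(evb M) '' (s : Set (Fin q)))) :
    c * ∑ i, (x i) ^ 2 ≤ ∑ i, ((M *ᵥ (x : Fin q → ℝ)) i) ^ 2 := by
  rw [← quad, quad_repr, normsq_repr M x, Finset.mul_sum]
  refine Finset.sum_le_sum fun j _ => ?_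
  by_cases hj : j ∈ s
  · exact mul_le_mul_of_nonneg_right (hc j hj) (sq_nonneg _)
  · rw [repr_eq_zero_of_mem_span (evb M) _ hx hj]
    simp

/-! ### Norm-style bounds -/

lemma sqrt_sum_sq_add_le (u v : Fin p → ℝ) :
    Real.sqrt (∑ i, (u i + v i) ^ 2) ≤
      Real.sqrt (∑ i, (u i) ^ 2) + Real.sqrt (∑ i, (v i) ^ 2) := by
  have h := norm_add_le ((WithLp.equiv 2 (Fin p → ℝ)).symm u) ((WithLp.equiv 2 (Fin p → ℝ)).symm v)
  simpa [EuclideanSpace.norm_eq, Real.norm_eq_abs, sq_abs] using h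

lemma opnorm_bound (M : Matrix (Fin p) (Fin q) ℝ) (hq : 0 < q) (x : EuclideanSpace ℝ (Fin q)) :
    Real.sqrt (∑ i, ((M *ᵥ (x : Fin q → ℝ)) i) ^ 2) ≤
      sval M 0 * Real.sqrt (∑ i, (x i) ^ 2) := by
  have hmem : x ∈ Submodule.span ℝ (⇑(evb M) '' ((Finset.univ : Finset (Fin q)) : Set (Fin q))) := by
    have : Submodule.span ℝ (Set.range ⇑(evb M)) = ⊤ := by
      rw [← (evb M).coe_toBasis]; exact (evb M).toBasis.span_eq
    rw [Finset.coe_univ, Set.image_univ, this]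
    trivial
  have htop : ∀ j : Fin q, eig M j ≤ eig M (Tuple.sort (eig M) (Fin.rev ⟨0, hq⟩)) := by
    intro j
    have hj : (Tuple.sort (eig M)).symm j ≤ Fin.rev ⟨0, hq⟩ := by
      have hlt := ((Tuple.sort (eig M)).symm j).isLt
      simp only [Fin.le_def, Fin.val_rev]
      omega
    have := Tuple.monotone_sort (eig M) hj
    simpa using this
  have h := quad_le_of_mem_span M Finset.univ _ (fun j _ => htop j) hmem
  have h2 := Real.sqrt_le_sqrt h
  calc Real.sqrt (∑ i, ((M *ᵥ (x : Fin q → ℝ)) i) ^ 2)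
      ≤ Real.sqrt (eig M (Tuple.sort (eig M) (Fin.rev ⟨0, hq⟩)) * ∑ i, (x i) ^ 2) := h2
    _ = sval M 0 * Real.sqrt (∑ i, (x i) ^ 2) := by
        rw [Real.sqrt_mul (eig_nonneg _ _), sval_eq M hq]

/-! ### Weyl inequality for singular values -/

lemma weyl (N M : Matrix (Fin p) (Fin q) ℝ) {i : ℕ} (hi : i < q) :
    sval N i ≤ sval M i + sval (N - M) 0 := by
  have hq : 0 < q := lt_of_le_of_lt (Nat.zero_le i) hi
  set bN := evb N
  set bM := evb M
  set iq : Fin q := ⟨i, hi⟩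
  set sN : Finset (Fin q) :=
    (Finset.Iic iq).image (fun j => Tuple.sort (eig N) (Fin.rev j)) with hsN
  set sM : Finset (Fin q) :=
    (Finset.Ici iq).image (fun j => Tuple.sort (eig M) (Fin.rev j)) with hsM
  have hinjN : Function.Injective (fun j : Fin q => Tuple.sort (eig N) (Fin.rev j)) :=
    (Tuple.sort (eig N)).injective.comp Fin.rev_injective
  have hinjM : Function.Injective (fun j : Fin q => Tuple.sort (eig M) (Fin.rev j)) :=
    (Tuple.sort (eig M)).injective.comp Fin.rev_injective
  have hcardN : sN.card = i + 1 := by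
    rw [hsN, Finset.card_image_of_injective _ hinjN, Fin.card_Iic]
  have hcardM : sM.card = q - i := by
    rw [hsM, Finset.card_image_of_injective _ hinjM, Fin.card_Ici]
  set S := Submodule.span ℝ (⇑bN '' (sN : Set (Fin q)))
  set U := Submodule.span ℝ (⇑bM '' (sM : Set (Fin q)))
  have hdim : q < finrank ℝ S + finrank ℝ U := by
    rw [finrank_span_image, finrank_span_image, hcardN, hcardM]
    omega
  obtain ⟨x, hxS, hxU, hx0⟩ := exists_ne_zero_mem_inf S U hdim
  -- positivity of the norm of x
  have hxpos : 0 < ∑ j, (x j) ^ 2 := by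
    by_contra hcon
    push_neg at hcon
    have hz : ∑ j, (x j) ^ 2 = 0 :=
      le_antisymm hcon (Finset.sum_nonneg fun j _ => sq_nonneg _)
    have hall := (Finset.sum_eq_zero_iff_of_nonneg fun j _ => sq_nonneg (x j)).mp hz
    apply hx0
    ext j
    have hj := hall j (Finset.mem_univ j)
    have hxj : x j = 0 := by
      have := pow_eq_zero_iff (n := 2) (by norm_num) |>.mp hj
      exact this
    simpa using hxj
  have hsq : 0 < Real.sqrt (∑ j, (x j) ^ 2) := Real.sqrt_pos.mpr hxpos
  -- lower bound on ‖N x‖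
  have hlow : sval N i * Real.sqrt (∑ j, (x j) ^ 2) ≤
      Real.sqrt (∑ j, ((N *ᵥ (x : Fin q → ℝ)) j) ^ 2) := by
    have hc : ∀ j ∈ sN, eig N (Tuple.sort (eig N) (Fin.rev iq)) ≤ eig N j := by
      intro j hj
      rw [hsN, Finset.mem_image] at hj
      obtain ⟨j', hj', rfl⟩ := hj
      rw [Finset.mem_Iic] at hj'
      exact Tuple.monotone_sort (eig N) (Fin.rev_le_rev.mpr hj')
    have h := quad_ge_of_mem_span N sN _ hc hxS
    have h2 := Real.sqrt_le_sqrt h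
    calc sval N i * Real.sqrt (∑ j, (x j) ^ 2)
        = Real.sqrt (eig N (Tuple.sort (eig N) (Fin.rev iq)) * ∑ j, (x j) ^ 2) := by
          rw [Real.sqrt_mul (eig_nonneg _ _), sval_eq N hi]
      _ ≤ _ := h2
  -- upper bound on ‖M x‖
  have hupM : Real.sqrt (∑ j, ((M *ᵥ (x : Fin q → ℝ)) j) ^ 2) ≤
      sval M i * Real.sqrt (∑ j, (x j) ^ 2) := by
    have hc : ∀ j ∈ sM, eig M j ≤ eig M (Tuple.sort (eig M) (Fin.rev iq)) := by
      intro j hj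
      rw [hsM, Finset.mem_image] at hj
      obtain ⟨j', hj', rfl⟩ := hj
      rw [Finset.mem_Ici] at hj'
      exact Tuple.monotone_sort (eig M) (Fin.rev_le_rev.mpr hj')
    have h := quad_le_of_mem_span M sM _ hc hxU
    have h2 := Real.sqrt_le_sqrt h
    calc Real.sqrt (∑ j, ((M *ᵥ (x : Fin q → ℝ)) j) ^ 2)
        ≤ Real.sqrt (eig M (Tuple.sort (eig M) (Fin.rev iq)) * ∑ j, (x j) ^ 2) := h2
      _ = sval M i * Real.sqrt (∑ j, (x j) ^ 2) := by
          rw [Real.sqrt_mul (eig_nonneg _ _), sval_eq M hi]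
  -- upper bound on ‖(N-M) x‖
  have hupE := opnorm_bound (N - M) hq x
  -- triangle
  have htri : Real.sqrt (∑ j, ((N *ᵥ (x : Fin q → ℝ)) j) ^ 2) ≤
      Real.sqrt (∑ j, ((M *ᵥ (x : Fin q → ℝ)) j) ^ 2) +
      Real.sqrt (∑ j, (((N - M) *ᵥ (x : Fin q → ℝ)) j) ^ 2) := by
    have hNx : (N *ᵥ (x : Fin q → ℝ)) =
        fun j => (M *ᵥ (x : Fin q → ℝ)) j + ((N - M) *ᵥ (x : Fin q → ℝ)) j := by
      funext j
      rw [Matrix.sub_mulVec]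
      simp
    rw [hNx]
    exact sqrt_sum_sq_add_le _ _
  have hfinal : sval N i * Real.sqrt (∑ j, (x j) ^ 2) ≤
      (sval M i + sval (N - M) 0) * Real.sqrt (∑ j, (x j) ^ 2) := by
    calc sval N i * Real.sqrt (∑ j, (x j) ^ 2)
        ≤ Real.sqrt (∑ j, ((N *ᵥ (x : Fin q → ℝ)) j) ^ 2) := hlow
      _ ≤ _ + _ := htri
      _ ≤ sval M i * Real.sqrt (∑ j, (x j) ^ 2) +
            sval (N - M) 0 * Real.sqrt (∑ j, (x j) ^ 2) := add_le_add hupM hupE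
      _ = (sval M i + sval (N - M) 0) * Real.sqrt (∑ j, (x j) ^ 2) := by ring
  exact le_of_mul_le_mul_right hfinal hsq


lemma spec_triangle (P Q : Matrix (Fin p) (Fin q) ℝ) :
    specNorm (P + Q) ≤ specNorm P + specNorm Q := by
  rcases Nat.eq_zero_or_pos q with hq | hq
  · subst hq
    have hzero : ∀ (R : Matrix (Fin p) (Fin 0) ℝ), specNorm R = 0 := by
      intro R
      rw [specNorm, sval, dif_neg (by omega)]
    rw [hzero, hzero, hzero]
    norm_num
  · set j0 := Tuple.sort (eig (P + Q)) (Fin.rev ⟨0, hq⟩)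
    set x : EuclideanSpace ℝ (Fin q) := evb (P + Q) j0 with hxdef
    have hnorm1 : ∑ i, (x i) ^ 2 = 1 := by
      have h1 : ‖x‖ = 1 := (evb (P + Q)).orthonormal.1 j0
      have h2 : ‖x‖ ^ 2 = ∑ i, (x i) ^ 2 := by
        rw [EuclideanSpace.norm_eq, Real.sq_sqrt (by positivity)]
        simp [Real.norm_eq_abs, sq_abs]
      rw [← h2, h1, one_pow]
    have hmem : x ∈ Submodule.span ℝ
        (⇑(evb (P + Q)) '' (({j0} : Finset (Fin q)) : Set (Fin q))) := by
      apply Submodule.subset_span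
      exact ⟨j0, by simp, rfl⟩
    have hc : ∀ j ∈ ({j0} : Finset (Fin q)), eig (P + Q) j0 ≤ eig (P + Q) j := by
      intro j hj
      rw [Finset.mem_singleton] at hj
      rw [hj]
    have hge := quad_ge_of_mem_span (P + Q) {j0} _ hc hmem
    rw [hnorm1, mul_one] at hge
    have hs1 : specNorm (P + Q) ≤
        Real.sqrt (∑ i, (((P + Q) *ᵥ (x : Fin q → ℝ)) i) ^ 2) := by
      rw [specNorm, sval_eq (P + Q) hq]
      exact Real.sqrt_le_sqrt hge
    have hPQ : ((P + Q) *ᵥ (x : Fin q → ℝ)) =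
        fun i => (P *ᵥ (x : Fin q → ℝ)) i + (Q *ᵥ (x : Fin q → ℝ)) i := by
      funext i
      rw [Matrix.add_mulVec]
      simp
    have hsqx : Real.sqrt (∑ i, (x i) ^ 2) = 1 := by rw [hnorm1, Real.sqrt_one]
    have hP := opnorm_bound P hq x
    have hQ := opnorm_bound Q hq x
    rw [hsqx, mul_one] at hP hQ
    calc specNorm (P + Q)
        ≤ Real.sqrt (∑ i, (((P + Q) *ᵥ (x : Fin q → ℝ)) i) ^ 2) := hs1
      _ ≤ Real.sqrt (∑ i, ((P *ᵥ (x : Fin q → ℝ)) i) ^ 2) +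
            Real.sqrt (∑ i, ((Q *ᵥ (x : Fin q → ℝ)) i) ^ 2) := by
          rw [hPQ]; exact sqrt_sum_sq_add_le _ _
      _ ≤ specNorm P + specNorm Q := add_le_add hP hQ

lemma kyFan_perturb (N M : Matrix (Fin p) (Fin q) ℝ) (k : ℕ) (hk : k ≤ q) :
    kyFan N k ≤ kyFan M k + (k : ℝ) * specNorm (N - M) := by
  rw [kyFan, kyFan]
  have h : ∀ i ∈ Finset.range k, sval N i ≤ sval M i + sval (N - M) 0 := by
    intro i hi
    rw [Finset.mem_range] at hi
    exact weyl N M (lt_of_lt_of_le hi hk)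
  calc ∑ i ∈ Finset.range k, sval N i
      ≤ ∑ i ∈ Finset.range k, (sval M i + sval (N - M) 0) := Finset.sum_le_sum h
    _ = ∑ i ∈ Finset.range k, sval M i + (k : ℝ) * specNorm (N - M) := by
        rw [Finset.sum_add_distrib, Finset.sum_const, Finset.card_range]
        rw [nsmul_eq_mul]; rfl

end SCODAux

open Matrix

/-- Theorem 3: combining the compression-error guarantee and the
merge-error bound yields the SCOD error bound. -/
theorem scod_error_bound
    {n dx dy nn l : ℕ}
    (X : Matrix (Fin n) (Fin dx) ℝ) (Y : Matrix (Fin n) (Fin dy) ℝ)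
    (C : Matrix (Fin nn) (Fin dx) ℝ) (D : Matrix (Fin nn) (Fin dy) ℝ)
    (A : Matrix (Fin l) (Fin dx) ℝ) (B : Matrix (Fin l) (Fin dy) ℝ)
    (ε : ℝ) (hε : 0 ≤ ε) (k m : ℕ) (hk1 : 1 ≤ k) (hkm : k < m) (hm : m ≤ min dx dy)
    (h1 : specNorm (Xᵀ * Y - Cᵀ * D) ≤
      (1 + ε) / ((m : ℝ) - (k : ℝ)) * (froNorm X * froNorm Y - kyFan (Xᵀ * Y) k))
    (h2 : specNorm (Cᵀ * D - Aᵀ * B) ≤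
      (1 / ((m : ℝ) - (k : ℝ))) * (froNorm X * froNorm Y - kyFan (Cᵀ * D) k)) :
    specNorm (Xᵀ * Y - Aᵀ * B) ≤
      ((2 + ε) / ((m : ℝ) - (k : ℝ)) + (1 + ε) * (k : ℝ) / ((m : ℝ) - (k : ℝ)) ^ 2) *
        (froNorm X * froNorm Y - kyFan (Xᵀ * Y) k) := by
  set r : ℝ := (m : ℝ) - (k : ℝ) with hrdef
  have hr : 0 < r := by
    have : (k : ℝ) < (m : ℝ) := Nat.cast_lt.mpr hkm
    simp only [hrdef]; linarith
  set F : ℝ := froNorm X * froNorm Y with hF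
  set Φ : ℝ := F - kyFan (Xᵀ * Y) k with hΦ
  set e1 : ℝ := specNorm (Xᵀ * Y - Cᵀ * D) with he1
  set e2 : ℝ := specNorm (Cᵀ * D - Aᵀ * B) with he2
  have tri : specNorm (Xᵀ * Y - Aᵀ * B) ≤ e1 + e2 := by
    have h := SCODAux.spec_triangle (Xᵀ * Y - Cᵀ * D) (Cᵀ * D - Aᵀ * B)
    rwa [sub_add_sub_cancel] at h
  have hky : kyFan (Xᵀ * Y) k ≤ kyFan (Cᵀ * D) k + (k : ℝ) * e1 := by
    have hk : k ≤ dy := le_trans (le_of_lt hkm) (le_trans hm (min_le_right _ _))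
    exact SCODAux.kyFan_perturb (Xᵀ * Y) (Cᵀ * D) k hk
  have h3 : e2 ≤ 1 / r * (Φ + (k : ℝ) * e1) := by
    refine le_trans h2 ?_
    apply mul_le_mul_of_nonneg_left _ (by positivity)
    simp only [hΦ]
    linarith
  have hkr : (0 : ℝ) ≤ 1 + (k : ℝ) / r := by positivity
  have h4 : e1 * (1 + (k : ℝ) / r) ≤ ((1 + ε) / r * Φ) * (1 + (k : ℝ) / r) :=
    mul_le_mul_of_nonneg_right h1 hkr
  calc specNorm (Xᵀ * Y - Aᵀ * B)
      ≤ e1 + e2 := tri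
    _ ≤ e1 + 1 / r * (Φ + (k : ℝ) * e1) := by linarith
    _ = e1 * (1 + (k : ℝ) / r) + Φ * (1 / r) := by field_simp; ring
    _ ≤ ((1 + ε) / r * Φ) * (1 + (k : ℝ) / r) + Φ * (1 / r) := by linarith
    _ = ((2 + ε) / r + (1 + ε) * (k : ℝ) / r ^ 2) * Φ := by field_simp; ring
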